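/- Let R be an n × n^{m−1} column-stochastic matrix, v a stochastic vector, α < 1/(m−1), γ ≥ 0, and let x be the unique stochastic solution of the multilinear PageRank equation. The shifted fixed-point iteration x^{(k+1)} = (α/(1+γ)) R (x^{(k)} ⊗ ⋯ ⊗ x^{(k)}) + ((1−α)/(1+γ)) v + (γ/(1+γ)) x^{(k)}, started from a stochastic x^{(0)}, satisfies ‖x^{(k)} − x‖₁ ≤ ((α(m−1) + γ)/(1+γ))^k ‖x^{(0)} − x‖₁. -/

import Mathlib

open Finset Matrix

def StochV {α : Type*} [Fintype α] (x : α → ℝ) : Prop :=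
  (∀ i, 0 ≤ x i) ∧ ∑ i, x i = 1

def norm1 {α : Type*} [Fintype α] (x : α → ℝ) : ℝ := ∑ i, |x i|

def kron {α β : Type*} (a : α → ℝ) (b : β → ℝ) : α × β → ℝ := fun p => a p.1 * b p.2

def kpow {n : ℕ} (x : Fin n → ℝ) (k : ℕ) : (Fin k → Fin n) → ℝ := fun f => ∏ i, x (f i)

def ColStoch {α β : Type*} [Fintype α] (R : Matrix α β ℝ) : Prop :=
  (∀ i j, 0 ≤ R i j) ∧ ∀ j, ∑ i, R i j = 1

lemma sum_kpow {n k : ℕ} (w : Fin n → ℝ) :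
    ∑ f : Fin k → Fin n, kpow w k f = (∑ i, w i) ^ k := by
  unfold kpow
  rw [← Fintype.piFinset_univ, ← Finset.prod_univ_sum]
  simp

lemma kpow_nonneg {n k : ℕ} {w : Fin n → ℝ} (hw : ∀ i, 0 ≤ w i) (f : Fin k → Fin n) :
    0 ≤ kpow w k f := Finset.prod_nonneg fun i _ => hw (f i)

lemma pi_sum_succ (k n : ℕ) (F : (Fin (k+1) → Fin n) → ℝ) :
    ∑ f : Fin (k+1) → Fin n, F f = ∑ a : Fin n, ∑ g : Fin k → Fin n, F (Fin.cons a g) := by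
  rw [← Fintype.sum_equiv (Fin.consEquiv fun _ => Fin n)
      (fun p => F (Fin.cons p.1 p.2)) F (fun p => rfl), Fintype.sum_prod_type]

lemma sum_mulVec_le {n : ℕ} {β : Type*} [Fintype β] {R : Matrix (Fin n) β ℝ}
    (hR : ColStoch R) (z : β → ℝ) : norm1 (R.mulVec z) ≤ norm1 z := by
  unfold norm1
  calc ∑ i, |R.mulVec z i| ≤ ∑ i, ∑ j, |R i j * z j| :=
        Finset.sum_le_sum fun i _ => Finset.abs_sum_le_sum_abs _ _
    _ = ∑ j, ∑ i, R i j * |z j| := by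
        rw [Finset.sum_comm]
        exact Finset.sum_congr rfl fun j _ => Finset.sum_congr rfl fun i _ => by
          rw [abs_mul, abs_of_nonneg (hR.1 i j)]
    _ = ∑ j, |z j| := Finset.sum_congr rfl fun j _ => by
        rw [← Finset.sum_mul, hR.2 j, one_mul]

lemma sum_mulVec_eq {n : ℕ} {β : Type*} [Fintype β] {R : Matrix (Fin n) β ℝ}
    (hR : ColStoch R) (z : β → ℝ) : ∑ i, R.mulVec z i = ∑ j, z j := by
  unfold Matrix.mulVec dotProduct
  rw [Finset.sum_comm]
  exact Finset.sum_congr rfl fun j _ => by rw [← Finset.sum_mul, hR.2 j, one_mul]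

lemma kpow_diff {n : ℕ} (x y : Fin n → ℝ)
    (hx1 : ∀ i, 0 ≤ x i) (hx2 : ∑ i, x i = 1)
    (hy1 : ∀ i, 0 ≤ y i) (hy2 : ∑ i, y i = 1) :
    ∀ k : ℕ, ∑ f : Fin k → Fin n, |kpow x k f - kpow y k f| ≤ k * ∑ i, |x i - y i| := by
  intro k
  induction k with
  | zero => simp [kpow]
  | succ k ih =>
    have hstep : ∀ (a : Fin n) (g : Fin k → Fin n),
        kpow x (k+1) (Fin.cons a g) - kpow y (k+1) (Fin.cons a g)
          = x a * (kpow x k g - kpow y k g) + (x a - y a) * kpow y k g := by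
      intro a g
      unfold kpow
      rw [Fin.prod_univ_succ, Fin.prod_univ_succ]
      simp [Fin.cons_zero, Fin.cons_succ]
      ring
    rw [pi_sum_succ]
    calc ∑ a : Fin n, ∑ g : Fin k → Fin n,
          |kpow x (k+1) (Fin.cons a g) - kpow y (k+1) (Fin.cons a g)|
        ≤ ∑ a : Fin n, ∑ g : Fin k → Fin n,
            (x a * |kpow x k g - kpow y k g| + |x a - y a| * kpow y k g) := by
          refine Finset.sum_le_sum fun a _ => Finset.sum_le_sum fun g _ => ?_
          rw [hstep a g]
          calc |x a * (kpow x k g - kpow y k g) + (x a - y a) * kpow y k g|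
              ≤ |x a * (kpow x k g - kpow y k g)| + |(x a - y a) * kpow y k g| :=
                abs_add_le _ _
            _ = x a * |kpow x k g - kpow y k g| + |x a - y a| * kpow y k g := by
                rw [abs_mul, abs_mul, abs_of_nonneg (hx1 a),
                  abs_of_nonneg (kpow_nonneg hy1 g)]
      _ = (∑ a, x a) * (∑ g : Fin k → Fin n, |kpow x k g - kpow y k g|)
            + (∑ a, |x a - y a|) * (∑ g : Fin k → Fin n, kpow y k g) := by
          rw [Finset.sum_mul, Finset.sum_mul]
          rw [← Finset.sum_add_distrib]
          exact Finset.sum_congr rfl fun a _ => by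
            rw [Finset.sum_add_distrib, Finset.mul_sum, Finset.mul_sum]
      _ ≤ ((k+1 : ℕ) : ℝ) * ∑ i, |x i - y i| := by
          rw [hx2, sum_kpow, hy2, one_pow, one_mul, mul_one]
          have := ih
          push_cast
          linarith

theorem stmt8 {n m : ℕ} (hm : 2 ≤ m)
    (R : Matrix (Fin n) (Fin (m - 1) → Fin n) ℝ) (hR : ColStoch R)
    (v : Fin n → ℝ) (hv : StochV v)
    (α : ℝ) (hα0 : 0 ≤ α) (hα : α < 1 / ((m : ℝ) - 1))
    (γ : ℝ) (hγ : 0 ≤ γ)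
    (x : Fin n → ℝ) (hx : StochV x)
    (hxe : x = fun i => α * R.mulVec (kpow x (m - 1)) i + (1 - α) * v i)
    (X : ℕ → (Fin n → ℝ)) (hX0 : StochV (X 0))
    (hrec : ∀ k, X (k + 1) = fun i =>
      (α / (1 + γ)) * R.mulVec (kpow (X k) (m - 1)) i
        + ((1 - α) / (1 + γ)) * v i + (γ / (1 + γ)) * X k i) :
    ∀ k, norm1 (X k - x) ≤ ((α * ((m : ℝ) - 1) + γ) / (1 + γ)) ^ k * norm1 (X 0 - x) := by
  have hmc : ((m - 1 : ℕ) : ℝ) = (m : ℝ) - 1 := by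
    have h1 : 1 ≤ m := by omega
    push_cast [Nat.cast_sub h1]
    ring
  have hm1 : (1 : ℝ) ≤ (m : ℝ) - 1 := by
    have : (2 : ℝ) ≤ (m : ℝ) := by exact_mod_cast hm
    linarith
  have hα1 : α < 1 := lt_of_lt_of_le hα (by
    rw [div_le_one (by linarith)]; linarith)
  have hγ1 : (0 : ℝ) < 1 + γ := by linarith
  -- stochasticity of all iterates
  have hXs : ∀ k, StochV (X k) := by
    intro k
    induction k with
    | zero => exact hX0
    | succ k ih =>
      rw [hrec k]
      constructor
      · intro i
        have h1 : 0 ≤ R.mulVec (kpow (X k) (m - 1)) i :=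
          Finset.sum_nonneg fun j _ => mul_nonneg (hR.1 i j) (kpow_nonneg ih.1 j)
        have h1a : (0:ℝ) ≤ 1 - α := by linarith
        exact add_nonneg (add_nonneg
          (mul_nonneg (div_nonneg hα0 hγ1.le) h1)
          (mul_nonneg (div_nonneg h1a hγ1.le) (hv.1 i)))
          (mul_nonneg (div_nonneg hγ hγ1.le) (ih.1 i))
      · rw [Finset.sum_add_distrib, Finset.sum_add_distrib,
          ← Finset.mul_sum, ← Finset.mul_sum, ← Finset.mul_sum,
          sum_mulVec_eq hR, sum_kpow, ih.2, hv.2, one_pow]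
        field_simp
        ring
  -- one-step contraction
  have key : ∀ k, norm1 (X (k+1) - x) ≤
      ((α * ((m : ℝ) - 1) + γ) / (1 + γ)) * norm1 (X k - x) := by
    intro k
    have hdiff : X (k+1) - x = fun i =>
        (α / (1 + γ)) * (R.mulVec (kpow (X k) (m - 1) - kpow x (m - 1)) i)
          + (γ / (1 + γ)) * (X k i - x i) := by
      funext i
      have hxi : x i = α * R.mulVec (kpow x (m - 1)) i + (1 - α) * v i := congrFun hxe i
      have hlin : R.mulVec (kpow (X k) (m - 1) - kpow x (m - 1)) i
          = R.mulVec (kpow (X k) (m - 1)) i - R.mulVec (kpow x (m - 1)) i := by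
        rw [Matrix.mulVec_sub]; rfl
      rw [Pi.sub_apply, hrec k, hlin]
      simp only []
      rw [hxi]
      field_simp
      ring
    rw [hdiff]
    unfold norm1
    calc ∑ i, |(α / (1 + γ)) * (R.mulVec (kpow (X k) (m - 1) - kpow x (m - 1)) i)
            + (γ / (1 + γ)) * (X k i - x i)|
        ≤ ∑ i, ((α / (1 + γ)) * |R.mulVec (kpow (X k) (m - 1) - kpow x (m - 1)) i|
            + (γ / (1 + γ)) * |X k i - x i|) := by
          refine Finset.sum_le_sum fun i _ => ?_
          calc |(α / (1 + γ)) * (R.mulVec (kpow (X k) (m - 1) - kpow x (m - 1)) i)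
                + (γ / (1 + γ)) * (X k i - x i)|
              ≤ |(α / (1 + γ)) * (R.mulVec (kpow (X k) (m - 1) - kpow x (m - 1)) i)|
                + |(γ / (1 + γ)) * (X k i - x i)| := abs_add_le _ _
            _ = (α / (1 + γ)) * |R.mulVec (kpow (X k) (m - 1) - kpow x (m - 1)) i|
                + (γ / (1 + γ)) * |X k i - x i| := by
                rw [abs_mul, abs_mul, abs_of_nonneg (by positivity : (0:ℝ) ≤ α / (1 + γ)),
                  abs_of_nonneg (by positivity : (0:ℝ) ≤ γ / (1 + γ))]
      _ = (α / (1 + γ)) * (∑ i, |R.mulVec (kpow (X k) (m - 1) - kpow x (m - 1)) i|)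
            + (γ / (1 + γ)) * (∑ i, |X k i - x i|) := by
          rw [Finset.sum_add_distrib, ← Finset.mul_sum, ← Finset.mul_sum]
      _ ≤ (α / (1 + γ)) * (((m : ℝ) - 1) * ∑ i, |X k i - x i|)
            + (γ / (1 + γ)) * (∑ i, |X k i - x i|) := by
          have h1 : ∑ i, |R.mulVec (kpow (X k) (m - 1) - kpow x (m - 1)) i|
              ≤ ∑ f, |kpow (X k) (m - 1) f - kpow x (m - 1) f| := by
            have := sum_mulVec_le hR (kpow (X k) (m - 1) - kpow x (m - 1))
            unfold norm1 at this
            simpa using this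
          have h2 := kpow_diff (X k) x (hXs k).1 (hXs k).2 hx.1 hx.2 (m - 1)
          rw [hmc] at h2
          have h3 : ∑ f, |kpow (X k) (m - 1) f - kpow x (m - 1) f|
              ≤ ((m : ℝ) - 1) * ∑ i, |X k i - x i| := h2
          have h4 := mul_le_mul_of_nonneg_left (le_trans h1 h3)
            (by positivity : (0:ℝ) ≤ α / (1 + γ))
          linarith
      _ = ((α * ((m : ℝ) - 1) + γ) / (1 + γ)) * ∑ i, |X k i - x i| := by
          field_simp
      _ = ((α * ((m : ℝ) - 1) + γ) / (1 + γ)) * ∑ i, |(X k - x) i| := by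
          simp [Pi.sub_apply]
  -- conclude by induction
  intro k
  induction k with
  | zero => simp
  | succ k ih =>
    have hc : (0 : ℝ) ≤ (α * ((m : ℝ) - 1) + γ) / (1 + γ) := by positivity
    calc norm1 (X (k+1) - x) ≤ ((α * ((m : ℝ) - 1) + γ) / (1 + γ)) * norm1 (X k - x) := key k
      _ ≤ ((α * ((m : ℝ) - 1) + γ) / (1 + γ)) *
          (((α * ((m : ℝ) - 1) + γ) / (1 + γ)) ^ k * norm1 (X 0 - x)) := by
          exact mul_le_mul_of_nonneg_left ih hc
      _ = ((α * ((m : ℝ) - 1) + γ) / (1 + γ)) ^ (k+1) * norm1 (X 0 - x) := by ring
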